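/- Let w be a word of length n that is the concatenation of words w^1 of length v and w^2 of length n-v, and let d be the number of ascents of w among positions 1,...,v (i.e., ascents of the prefix (w_1,...,w_{v+1}) counted within the first v positions). Then revmaj(w) = (n-v)·d + revmaj(w^1) + revmaj(w^2). -/
import Mathlib


/-- The set of ascent positions of a word `w` (1-based): `Asc(w) = {1 ≤ i < n : w_i < w_{i+1}}`. -/
def ascSet (w : List ℕ) : Finset ℕ :=
  (Finset.Ico 1 w.length).filter fun i => w.getD (i - 1) 0 < w.getD i 0

/-- The reverse major index `revmaj(w) = Σ_{i ∈ Asc(w)} (n - i)`. -/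
def revmaj (w : List ℕ) : ℕ := ∑ i ∈ ascSet w, (w.length - i)

theorem revmaj_eq_sum_ite (w : List ℕ) :
    revmaj w = ∑ i ∈ Finset.Ico 1 w.length,
      (if w.getD (i - 1) 0 < w.getD i 0 then w.length - i else 0) := by
  rw [revmaj, ascSet, Finset.sum_filter]

/-- if `w = w¹ ++ w²` with `v = |w¹|`, `n = |w|`, and `d` is the number of
ascents of `w` among positions `1, …, v` (i.e. ascents of the prefix `(w_1, …, w_{v+1})`
counted within the first `v` positions), then
`revmaj(w) = (n - v)·d + revmaj(w¹) + revmaj(w²)`. -/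
theorem revmaj_append (w1 w2 : List ℕ) :
    revmaj (w1 ++ w2) =
      w2.length *
        ((Finset.Icc 1 w1.length).filter
            (fun i => (w1 ++ w2).getD (i - 1) 0 < (w1 ++ w2).getD i 0)).card +
      revmaj w1 + revmaj w2 := by
  set v := w1.length with hv
  set m := w2.length with hm
  rcases Nat.eq_zero_or_pos m with hm0 | hm0
  · have h2 : w2 = [] := List.length_eq_zero_iff.mp (by omega)
    subst h2
    have hrm : revmaj ([] : List ℕ) = 0 := by simp [revmaj, ascSet]
    rw [List.append_nil, hrm, hm0]
    ring
  rcases Nat.eq_zero_or_pos v with hv0 | hv0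
  · have h1 : w1 = [] := List.length_eq_zero_iff.mp (by omega)
    subst h1
    have hrm : revmaj ([] : List ℕ) = 0 := by simp [revmaj, ascSet]
    have hIcc : Finset.Icc 1 v = ∅ := Finset.Icc_eq_empty (by omega)
    rw [List.nil_append, hrm, hIcc, Finset.filter_empty, Finset.card_empty]
    ring
  have hlen : (w1 ++ w2).length = v + m := by simp [hv, hm]
  rw [revmaj_eq_sum_ite, hlen]
  rw [← Finset.sum_Ico_consecutive _ (by omega : 1 ≤ v + 1) (by omega : v + 1 ≤ v + m)]
  have hfirst : ∑ i ∈ Finset.Ico 1 (v + 1),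
      (if (w1 ++ w2).getD (i - 1) 0 < (w1 ++ w2).getD i 0 then v + m - i else 0)
      = m * ((Finset.Icc 1 v).filter
            (fun i => (w1 ++ w2).getD (i - 1) 0 < (w1 ++ w2).getD i 0)).card + revmaj w1 := by
    have step1 : ∀ i ∈ Finset.Ico 1 (v + 1),
        (if (w1 ++ w2).getD (i - 1) 0 < (w1 ++ w2).getD i 0 then v + m - i else 0)
        = (if (w1 ++ w2).getD (i - 1) 0 < (w1 ++ w2).getD i 0 then m else 0)
          + (if (w1 ++ w2).getD (i - 1) 0 < (w1 ++ w2).getD i 0 then v - i else 0) := by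
      intro i hi
      simp only [Finset.mem_Ico] at hi
      split <;> omega
    rw [Finset.sum_congr rfl step1, Finset.sum_add_distrib]
    congr 1
    · rw [← Finset.sum_filter, Finset.sum_const, smul_eq_mul, mul_comm, Finset.Ico_add_one_right_eq_Icc]
    · -- second piece equals revmaj w1
      rw [Finset.sum_Ico_succ_top (by omega : 1 ≤ v)]
      simp only [Nat.sub_self, ite_self, add_zero]
      rw [revmaj_eq_sum_ite]
      apply Finset.sum_congr rfl
      intro i hi
      simp only [Finset.mem_Ico] at hi
      rw [List.getD_append _ _ _ _ (by omega), List.getD_append _ _ _ _ (by omega)]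
  have hsecond : ∑ i ∈ Finset.Ico (v + 1) (v + m),
      (if (w1 ++ w2).getD (i - 1) 0 < (w1 ++ w2).getD i 0 then v + m - i else 0)
      = revmaj w2 := by
    rw [revmaj_eq_sum_ite]
    rw [Finset.sum_Ico_eq_sum_range, Finset.sum_Ico_eq_sum_range]
    have : v + m - (v + 1) = m - 1 := by omega
    rw [this]
    have : m - 1 = m - 1 := rfl
    apply Finset.sum_congr rfl
    intro i hi
    simp only [Finset.mem_range] at hi
    rw [List.getD_append_right _ _ _ _ (by omega : w1.length ≤ v + 1 + i - 1),
        List.getD_append_right _ _ _ _ (by omega : w1.length ≤ v + 1 + i)]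
    have e1 : v + 1 + i - 1 - w1.length = 1 + i - 1 := by omega
    have e2 : v + 1 + i - w1.length = 1 + i := by omega
    rw [e1, e2]
    have e3 : v + m - (v + 1 + i) = m - (1 + i) := by omega
    rw [e3]
  rw [hfirst, hsecond]
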